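/- Let d = 3, ψ(r) = r^{1/2}, φ(r) = r², and for N > 1 let w_N = (N/2)·1_{(1−1/N, 1+1/N)}, so that α_k^{(N)}(ρ) = (Nρ/4) ∫_{1−1/N}^{1+1/N} J_{k+1/2}(rρ)² r dr for k ∈ ℕ₀. Then: (i) for all ρ > 0 and all N > 1, 2π α₀^{(N)}(ρ) = 1 − (N/(4ρ))(sin(2ρ(1+1/N)) − sin(2ρ(1−1/N))), and consequently sup_{ρ > 0} α₀^{(N)}(ρ) ≤ 1/π; (ii) there exist ρ₀ ∈ (0,π) and N₀ such that for all N ≥ N₀, α₁^{(N)}(ρ₀) > 1/π. In particular, for such N, sup_{k ∈ ℕ₀} sup_{ρ > 0} α_k^{(N)}(ρ) > sup_{ρ > 0} α₀^{(N)}(ρ). -/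

import Mathlib

noncomputable section

open MeasureTheory Real Filter

/-- The Bessel function of the first kind of order `ν`, via the Poisson integral
representation (real form; valid for `ν > -1/2` and `r > 0`). -/
def besselJ (ν : ℝ) (r : ℝ) : ℝ :=
  (r / 2) ^ ν / (Real.Gamma (1 / 2) * Real.Gamma (ν + 1 / 2)) *
    ∫ t in (-1 : ℝ)..1, Real.cos (r * t) * (1 - t ^ 2) ^ (ν - 1 / 2)

/-- In dimension `d = 3`, with `ψ(r) = r^{1/2}`, `φ(r) = r²` and weight
`w_N = (N/2)·1_{(1−1/N,1+1/N)}`, the function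
`α_k^{(N)}(ρ) = (Nρ/4) ∫_{1−1/N}^{1+1/N} J_{k+1/2}(rρ)² r dr`. -/
def alphaN (N : ℝ) (k : ℕ) (ρ : ℝ) : ℝ :=
  N * ρ / 4 * ∫ r in Set.Ioo (1 - 1 / N) (1 + 1 / N), besselJ ((k : ℝ) + 1 / 2) (r * ρ) ^ 2 * r

private theorem abs_sin_sub_sin_le (x y:ℝ) : |Real.sin x - Real.sin y| ≤ |x - y| := by
  rw [Real.sin_sub_sin]
  have h1 : |Real.sin ((x-y)/2)| ≤ |(x-y)/2| := abs_sin_le_abs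
  have h2 : |Real.cos ((x+y)/2)| ≤ 1 := Real.abs_cos_le_one _
  have h3 : |(x-y)/2| = |x-y|/2 := by rw [abs_div, abs_two]
  calc |2 * Real.sin ((x-y)/2) * Real.cos ((x+y)/2)|
      = 2 * |Real.sin ((x-y)/2)| * |Real.cos ((x+y)/2)| := by
        rw [abs_mul, abs_mul, abs_two]
    _ ≤ 2 * |(x-y)/2| * 1 := by
        apply mul_le_mul _ h2 (abs_nonneg _) (by positivity)
        nlinarith [abs_nonneg (Real.sin ((x-y)/2))]
    _ = |x - y| := by rw [h3]; ring
private theorem abs_cos_sub_cos_le (x y:ℝ) : |Real.cos x - Real.cos y| ≤ |x - y| := by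
  rw [Real.cos_sub_cos]
  have h1 : |Real.sin ((x-y)/2)| ≤ |(x-y)/2| := abs_sin_le_abs
  have h2 : |Real.sin ((x+y)/2)| ≤ 1 := Real.abs_sin_le_one _
  have h3 : |(x-y)/2| = |x-y|/2 := by rw [abs_div, abs_two]
  calc |-2 * Real.sin ((x+y)/2) * Real.sin ((x-y)/2)|
      = 2 * |Real.sin ((x+y)/2)| * |Real.sin ((x-y)/2)| := by
        rw [abs_mul, abs_mul, abs_neg, abs_two]
    _ ≤ 2 * 1 * |(x-y)/2| := by
        apply mul_le_mul _ h1 (abs_nonneg _) (by positivity)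
        nlinarith [abs_nonneg (Real.sin ((x+y)/2))]
    _ = |x - y| := by rw [h3]; ring


lemma integral_cos_mul' (x : ℝ) (hx : x ≠ 0) :
    ∫ t in (-1:ℝ)..1, Real.cos (x*t) = 2 * Real.sin x / x := by
  have h : ∀ t ∈ Set.uIcc (-1:ℝ) 1,
      HasDerivAt (fun t => Real.sin (x*t) / x) (Real.cos (x*t)) t := by
    intro t _
    have h1 : HasDerivAt (fun t : ℝ => x*t) x t := by
      simpa using (hasDerivAt_id t).const_mul x
    have := ((Real.hasDerivAt_sin (x*t)).comp t h1).div_const x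
    refine this.congr_deriv ?_
    field_simp
  rw [intervalIntegral.integral_eq_sub_of_hasDerivAt h
    ((Real.continuous_cos.comp (continuous_const.mul continuous_id)).intervalIntegrable _ _)]
  simp [Real.sin_neg]
  ring

lemma integral_cos_mul_poly (x : ℝ) (hx : x ≠ 0) :
    ∫ t in (-1:ℝ)..1, Real.cos (x*t) * (1 - t^2)
      = 4 * (Real.sin x / x^3 - Real.cos x / x^2) := by
  have h : ∀ t ∈ Set.uIcc (-1:ℝ) 1,
      HasDerivAt (fun t => (1 - t^2) * Real.sin (x*t) / x
        - 2*t*Real.cos (x*t)/x^2 + 2*Real.sin (x*t)/x^3)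
        (Real.cos (x*t) * (1 - t^2)) t := by
    intro t _
    have h1 : HasDerivAt (fun t : ℝ => x*t) x t := by
      simpa using (hasDerivAt_id t).const_mul x
    have hs : HasDerivAt (fun t : ℝ => Real.sin (x*t)) (Real.cos (x*t) * x) t :=
      (Real.hasDerivAt_sin (x*t)).comp t h1
    have hc : HasDerivAt (fun t : ℝ => Real.cos (x*t)) (-Real.sin (x*t) * x) t :=
      (Real.hasDerivAt_cos (x*t)).comp t h1
    have hp : HasDerivAt (fun t : ℝ => 1 - t^2) (-(2*t)) t := by
      simpa using ((hasDerivAt_pow 2 t).const_sub 1)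
    have hq : HasDerivAt (fun t : ℝ => 2*t) 2 t := by
      simpa using (hasDerivAt_id t).const_mul 2
    have := (((hp.mul hs).div_const x).sub
        ((hq.mul hc).div_const (x^2))).add ((hs.const_mul 2).div_const (x^3))
    refine this.congr_deriv ?_
    field_simp
    ring
  rw [intervalIntegral.integral_eq_sub_of_hasDerivAt h
    (((Real.continuous_cos.comp (continuous_const.mul continuous_id)).mul
      (by continuity)).intervalIntegrable _ _)]
  simp [Real.sin_neg, Real.cos_neg]
  field_simp
  ring


lemma besselJ_half_sq (x : ℝ) (hx : 0 < x) :
    besselJ (1/2) x ^ 2 = 2 * Real.sin x ^ 2 / (π * x) := by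
  have hx' : x ≠ 0 := ne_of_gt hx
  have e0 : ((1:ℝ)/2 - 1/2) = 0 := by norm_num
  have e1 : ((1:ℝ)/2 + 1/2) = 1 := by norm_num
  have hrp : ((x/2) ^ ((1:ℝ)/2)) ^ 2 = x / 2 := by
    rw [← Real.rpow_natCast ((x/2) ^ ((1:ℝ)/2)) 2, ← Real.rpow_mul (by positivity)]
    norm_num
  have hsq : Real.sqrt π ^ 2 = π := Real.sq_sqrt pi_pos.le
  have hsn : Real.sqrt π ≠ 0 := by positivity
  rw [besselJ, e0, e1]
  simp only [Real.rpow_zero, mul_one, Real.Gamma_one, Real.Gamma_one_half_eq]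
  rw [integral_cos_mul' x hx']
  rw [mul_pow, div_pow, hrp, hsq]
  field_simp

lemma besselJ_three_half_sq (x : ℝ) (hx : 0 < x) :
    besselJ (1 + 1/2) x ^ 2 = 2 / (π * x) * (Real.sin x / x - Real.cos x) ^ 2 := by
  have hx' : x ≠ 0 := ne_of_gt hx
  have e0 : ((1:ℝ) + 1/2 - 1/2) = 1 := by norm_num
  have e1 : ((1:ℝ) + 1/2 + 1/2) = 2 := by norm_num
  have hrp : ((x/2) ^ ((1:ℝ) + 1/2)) ^ 2 = (x/2)^3 := by
    rw [← Real.rpow_natCast ((x/2) ^ ((1:ℝ)+1/2)) 2, ← Real.rpow_mul (by positivity)]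
    norm_num
  have hsq : Real.sqrt π ^ 2 = π := Real.sq_sqrt pi_pos.le
  rw [besselJ, e0, e1]
  simp only [Real.rpow_one, Real.Gamma_two, Real.Gamma_one_half_eq, mul_one]
  rw [integral_cos_mul_poly x hx']
  rw [mul_pow, div_pow, hrp, hsq]
  field_simp
  ring

lemma integral_sin_sq' (ρ a b : ℝ) (hρ : ρ ≠ 0) :
    ∫ r in a..b, Real.sin (r*ρ) ^ 2
      = (b - a)/2 - (Real.sin (2*ρ*b) - Real.sin (2*ρ*a))/(4*ρ) := by
  have h : ∀ r ∈ Set.uIcc a b,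
      HasDerivAt (fun r => r/2 - Real.sin (2*ρ*r)/(4*ρ)) (Real.sin (r*ρ)^2) r := by
    intro r _
    have h1 : HasDerivAt (fun r : ℝ => 2*ρ*r) (2*ρ) r := by
      simpa using (hasDerivAt_id r).const_mul (2*ρ)
    have hs : HasDerivAt (fun r : ℝ => Real.sin (2*ρ*r)) (Real.cos (2*ρ*r) * (2*ρ)) r :=
      (Real.hasDerivAt_sin _).comp r h1
    have := ((hasDerivAt_id r).div_const 2).sub (hs.div_const (4*ρ))
    refine this.congr_deriv ?_
    have hcos : Real.cos (2*ρ*r) = 1 - 2 * Real.sin (r*ρ)^2 := by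
      rw [show 2*ρ*r = 2*(r*ρ) by ring, Real.cos_two_mul', ]
      rw [Real.sin_sq]
      ring
    rw [hcos]
    field_simp
    ring
  rw [intervalIntegral.integral_eq_sub_of_hasDerivAt h (by
    apply Continuous.intervalIntegrable
    continuity)]
  ring


lemma alphaN_zero_eq (N ρ : ℝ) (hN : 1 < N) (hρ : 0 < ρ) :
    alphaN N 0 ρ = 1/(2*π)
      - N/(8*π*ρ) * (Real.sin (2*ρ*(1+1/N)) - Real.sin (2*ρ*(1-1/N))) := by
  have hN0 : (0:ℝ) < N := by linarith
  have ha : (0:ℝ) < 1 - 1/N := by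
    have : 1/N < 1 := by rw [div_lt_one hN0]; exact hN
    linarith
  have hab : (1 - 1/N : ℝ) ≤ 1 + 1/N := by
    have : (0:ℝ) < 1/N := by positivity
    linarith
  have hρ' : ρ ≠ 0 := ne_of_gt hρ
  have hπ : π ≠ 0 := pi_ne_zero
  have hcongr : ∫ r in Set.Ioo (1 - 1/N) (1 + 1/N), besselJ (((0:ℕ):ℝ) + 1/2) (r*ρ)^2 * r
      = ∫ r in Set.Ioo (1 - 1/N) (1 + 1/N), Real.sin (r*ρ)^2 * (2/(π*ρ)) := by
    apply MeasureTheory.setIntegral_congr_fun measurableSet_Ioo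
    intro r hr
    have hr0 : 0 < r := lt_trans ha hr.1
    have hrρ : 0 < r * ρ := mul_pos hr0 hρ
    simp only [Nat.cast_zero, zero_add]
    rw [besselJ_half_sq _ hrρ]
    field_simp
  rw [alphaN, hcongr, MeasureTheory.integral_mul_const,
    ← MeasureTheory.integral_Ioc_eq_integral_Ioo,
    ← intervalIntegral.integral_of_le hab, integral_sin_sq' ρ _ _ hρ']
  have hb : (1 + 1/N : ℝ) - (1 - 1/N) = 2/N := by ring
  rw [hb]
  field_simp
  ring

lemma h_lb (r : ℝ) (hr : r ∈ Set.Icc (199/200 : ℝ) (201/200)) :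
    (51/50 : ℝ) ≤ Real.sin (r*(5*π/6))/(r*(5*π/6)) - Real.cos (r*(5*π/6)) := by
  have hπ1 : (3.14:ℝ) < π := Real.pi_gt_d2
  have hπ2 : π < 3.15 := Real.pi_lt_d2
  set ρ₀ := 5*π/6 with hρ
  have hρlb : (2.61:ℝ) < ρ₀ := by rw [hρ]; nlinarith
  have hρub : ρ₀ < 2.625 := by rw [hρ]; nlinarith
  have hsin : Real.sin ρ₀ = 1/2 := by
    rw [hρ, show 5*π/6 = π - π/6 by ring, Real.sin_pi_sub, Real.sin_pi_div_six]
  have hcos : Real.cos ρ₀ = -(Real.sqrt 3/2) := by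
    rw [hρ, show 5*π/6 = π - π/6 by ring, Real.cos_pi_sub, Real.cos_pi_div_six]
  have hd : |r*ρ₀ - ρ₀| ≤ 2.625/200 := by
    rw [show r*ρ₀ - ρ₀ = ρ₀*(r-1) by ring, abs_mul]
    have h1 : |r - 1| ≤ 1/200 := abs_le.mpr ⟨by linarith [hr.1], by linarith [hr.2]⟩
    have h2 : |ρ₀| ≤ 2.625 := abs_le.mpr ⟨by linarith, le_of_lt hρub⟩
    calc |ρ₀| * |r-1| ≤ 2.625 * (1/200) := mul_le_mul h2 h1 (abs_nonneg _) (by norm_num)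
      _ = 2.625/200 := by norm_num
  have hs := _root_.abs_sin_sub_sin_le (r*ρ₀) ρ₀
  have hc := _root_.abs_cos_sub_cos_le (r*ρ₀) ρ₀
  rw [hsin] at hs; rw [hcos] at hc
  have hsl : (0.486:ℝ) ≤ Real.sin (r*ρ₀) := by
    have := abs_le.mp (le_trans hs hd); linarith [this.1]
  have hcu : Real.cos (r*ρ₀) ≤ -(Real.sqrt 3/2) + 2.625/200 := by
    have := abs_le.mp (le_trans hc hd); linarith [this.2]
  have hsqrt3 : (1.732:ℝ) ≤ Real.sqrt 3 := by
    nlinarith [Real.sq_sqrt (by norm_num : (0:ℝ) ≤ 3), Real.sqrt_nonneg 3]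
  have hu_pos : 0 < r*ρ₀ := mul_pos (by linarith [hr.1]) (by linarith)
  have hu_ub : r*ρ₀ ≤ 2.64 := by nlinarith [hr.2, hr.1]
  have hdiv : (0.486:ℝ)/2.64 ≤ Real.sin (r*ρ₀)/(r*ρ₀) :=
    div_le_div₀ (by linarith) hsl hu_pos hu_ub
  have : (0.486:ℝ)/2.64 ≥ 0.184 := by norm_num
  linarith

lemma alphaN_one_lb (N : ℝ) (hN : 200 ≤ N) : 2601/(2500*π) ≤ alphaN N 1 (5*π/6) := by
  have hπ : (0:ℝ) < π := pi_pos
  set ρ₀ := 5*π/6 with hρdef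
  have hρ₀ : 0 < ρ₀ := by positivity
  have hN0 : (0:ℝ) < N := by linarith
  have h1N : 1/N ≤ 1/200 := by
    apply one_div_le_one_div_of_le <;> linarith
  have h1N0 : (0:ℝ) < 1/N := by positivity
  have ha : (199/200:ℝ) ≤ 1 - 1/N := by linarith
  have hb : (1 + 1/N:ℝ) ≤ 201/200 := by linarith
  have hab : (1 - 1/N:ℝ) ≤ 1 + 1/N := by linarith
  have hsub : Set.Icc (1 - 1/N:ℝ) (1 + 1/N) ⊆ Set.Icc (199/200:ℝ) (201/200) :=
    Set.Icc_subset_Icc ha hb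
  have hcongr : ∫ r in Set.Ioo (1 - 1/N) (1 + 1/N), besselJ (((1:ℕ):ℝ) + 1/2) (r*ρ₀)^2 * r
      = ∫ r in Set.Ioo (1 - 1/N) (1 + 1/N),
          (Real.sin (r*ρ₀)/(r*ρ₀) - Real.cos (r*ρ₀))^2 * (2/(π*ρ₀)) := by
    apply MeasureTheory.setIntegral_congr_fun measurableSet_Ioo
    intro r hr
    have hr0 : (0:ℝ) < r := lt_of_lt_of_le (by norm_num) (le_trans ha hr.1.le)
    have hrρ : 0 < r * ρ₀ := mul_pos hr0 hρ₀
    simp only [Nat.cast_one]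
    rw [besselJ_three_half_sq _ hrρ]
    field_simp
  have hcont : IntervalIntegrable
      (fun r => (Real.sin (r*ρ₀)/(r*ρ₀) - Real.cos (r*ρ₀))^2) volume (1 - 1/N) (1 + 1/N) := by
    apply ContinuousOn.intervalIntegrable
    apply ContinuousOn.pow
    apply ContinuousOn.sub
    · apply ContinuousOn.div
        (Continuous.continuousOn (Real.continuous_sin.comp (continuous_id.mul continuous_const)))
        ((continuous_id.mul continuous_const).continuousOn)
      intro r hr
      rw [Set.uIcc_of_le hab] at hr
      have hr0 : (0:ℝ) < r := lt_of_lt_of_le (by norm_num) (le_trans ha hr.1)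
      exact (mul_pos hr0 hρ₀).ne'
    · exact (Real.continuous_cos.comp (continuous_id.mul continuous_const)).continuousOn
  have hpt : ∀ r ∈ Set.Icc (1 - 1/N) (1 + 1/N),
      (2601/2500 : ℝ) ≤ (Real.sin (r*ρ₀)/(r*ρ₀) - Real.cos (r*ρ₀))^2 := by
    intro r hr
    have := h_lb r (hsub hr)
    nlinarith [this]
  have hlow : (2/N) * (2601/2500) ≤
      ∫ r in (1 - 1/N)..(1 + 1/N), (Real.sin (r*ρ₀)/(r*ρ₀) - Real.cos (r*ρ₀))^2 := by
    have := intervalIntegral.integral_mono_on hab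
      (intervalIntegrable_const (c := (2601/2500 : ℝ))) hcont hpt
    rw [intervalIntegral.integral_const] at this
    calc (2/N) * (2601/2500)
        = (1 + 1/N - (1 - 1/N)) • (2601/2500 : ℝ) := by
          rw [smul_eq_mul]; ring
      _ ≤ _ := this
  rw [alphaN, hcongr, MeasureTheory.integral_mul_const,
    ← MeasureTheory.integral_Ioc_eq_integral_Ioo,
    ← intervalIntegral.integral_of_le hab]
  have hc : (0:ℝ) < N * ρ₀ / 4 * (2/(π*ρ₀)) := by positivity
  calc (2601/(2500*π) : ℝ)
      = N * ρ₀ / 4 * ((2/N) * (2601/2500) * (2/(π*ρ₀))) := by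
        field_simp
        ring
    _ ≤ N * ρ₀ / 4 * ((∫ r in (1 - 1/N)..(1 + 1/N),
          (Real.sin (r*ρ₀)/(r*ρ₀) - Real.cos (r*ρ₀))^2) * (2/(π*ρ₀))) := by
        apply mul_le_mul_of_nonneg_left _ (by positivity)
        apply mul_le_mul_of_nonneg_right hlow (by positivity)


/-- (i) for all `N > 1` and `ρ > 0`,
`2π α₀^{(N)}(ρ) = 1 − (N/(4ρ))(sin(2ρ(1+1/N)) − sin(2ρ(1−1/N)))`, so
`α₀^{(N)}(ρ) ≤ 1/π`; (ii) there exist `ρ₀ ∈ (0,π)` and `N₀` such that for all `N ≥ N₀`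
one has `α₁^{(N)}(ρ₀) > 1/π`, and in particular for such `N` the double supremum
`sup_k sup_ρ α_k^{(N)}` strictly exceeds `sup_ρ α₀^{(N)}`. -/
theorem alphaN_sup_not_attained_at_zero :
    (∀ N : ℝ, 1 < N → ∀ ρ : ℝ, 0 < ρ →
      2 * π * alphaN N 0 ρ =
        1 - N / (4 * ρ) * (Real.sin (2 * ρ * (1 + 1 / N)) - Real.sin (2 * ρ * (1 - 1 / N))) ∧
      alphaN N 0 ρ ≤ 1 / π) ∧
    (∃ ρ₀ ∈ Set.Ioo (0 : ℝ) π, ∃ N₀ : ℝ, ∀ N : ℝ, N₀ ≤ N →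
      1 / π < alphaN N 1 ρ₀ ∧
      ∃ (k : ℕ) (ρ : ℝ), 0 < ρ ∧ ∀ ρ' : ℝ, 0 < ρ' → alphaN N 0 ρ' < alphaN N k ρ) := by
  have hπ : (0:ℝ) < π := pi_pos
  have part1 : ∀ N : ℝ, 1 < N → ∀ ρ : ℝ, 0 < ρ →
      2 * π * alphaN N 0 ρ =
        1 - N / (4 * ρ) * (Real.sin (2 * ρ * (1 + 1 / N)) - Real.sin (2 * ρ * (1 - 1 / N))) ∧
      alphaN N 0 ρ ≤ 1 / π := by
    intro N hN ρ hρ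
    have hN0 : (0:ℝ) < N := by linarith
    have hid := alphaN_zero_eq N ρ hN hρ
    constructor
    · rw [hid]; field_simp; ring
    · have habs := _root_.abs_sin_sub_sin_le (2*ρ*(1+1/N)) (2*ρ*(1-1/N))
      have harg : |2*ρ*(1+1/N) - 2*ρ*(1-1/N)| = 4*ρ/N := by
        rw [show 2*ρ*(1+1/N) - 2*ρ*(1-1/N) = 4*ρ/N by ring]
        exact abs_of_pos (by positivity)
      rw [harg] at habs
      have hΔ : -(4*ρ/N) ≤ Real.sin (2*ρ*(1+1/N)) - Real.sin (2*ρ*(1-1/N)) :=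
        (abs_le.mp habs).1
      have hc : (0:ℝ) < N/(8*π*ρ) := by positivity
      have hkey : N/(8*π*ρ) * (4*ρ/N) = 1/(2*π) := by field_simp; ring
      have := mul_le_mul_of_nonneg_left hΔ hc.le
      rw [hid]
      have h2 : 1/(2*π) + 1/(2*π) = 1/π := by field_simp; norm_num
      nlinarith [this, hkey]
  refine ⟨part1, 5*π/6, ⟨by positivity, by linarith⟩, 200, ?_⟩
  intro N hN
  have hmain := alphaN_one_lb N hN
  have h1π : 1/π < 2601/(2500*π) := by
    rw [div_lt_div_iff₀ hπ (by positivity)]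
    nlinarith
  have hlt : 1/π < alphaN N 1 (5*π/6) := lt_of_lt_of_le h1π hmain
  refine ⟨hlt, 1, 5*π/6, by positivity, ?_⟩
  intro ρ' hρ'
  exact lt_of_le_of_lt ((part1 N (by linarith) ρ' hρ').2) hlt
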